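/- arXiv:2402.11157 — 2 statements merged into one kernel-verified Lean document; each statement's English description precedes it below -/
import Mathlib

section
/- Let $X_1, \dots, X_Q$ and $W$ be real-valued random variables (not necessarily independent of each other), let $a_1 > a_2 > \dots > a_Q > 0$ be positive constants, and let $Y_1, \dots, Y_Q$ be i.i.d. real-valued random variables independent of $(X_1, \dots, X_Q, W)$. Define $M_C = \max_{1 \le i \le Q}\{X_i + a_i Y_1\}$ and $M_I = \max_{1 \le i \le Q}\{X_i + a_i Y_i\}$. Then the distribution of $M_I$ first-order stochastically dominates that of $M_C$, and the distribution of $\max\{M_I, W\}$ first-order stochastically dominates that of $\max\{M_C, W\}$. -/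
open MeasureTheory ProbabilityTheory

theorem stmt_3 {Ω : Type*} [MeasureSpace Ω] [IsProbabilityMeasure (ℙ : Measure Ω)]
    (Q : ℕ) (hQ : 0 < Q) (X : Fin Q → Ω → ℝ) (W : Ω → ℝ) (a : Fin Q → ℝ)
    (ha_pos : ∀ i, 0 < a i) (ha_mono : ∀ i j : Fin Q, i < j → a j < a i)
    (Y : Fin Q → Ω → ℝ)
    (hXmeas : ∀ i, Measurable (X i)) (hWmeas : Measurable W) (hYmeas : ∀ i, Measurable (Y i))
    (hYindep : iIndepFun Y ℙ)
    (hYident : ∀ i j, IdentDistrib (Y i) (Y j) ℙ ℙ)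
    (hindep : IndepFun (fun ω => (fun i => X i ω, W ω)) (fun ω i => Y i ω) ℙ)
    (hne : (Finset.univ : Finset (Fin Q)).Nonempty) :
    (∀ t : ℝ,
        ℙ {ω | (Finset.univ.sup' hne fun i => X i ω + a i * Y i ω) ≤ t}
          ≤ ℙ {ω | (Finset.univ.sup' hne fun i => X i ω + a i * Y ⟨0, hQ⟩ ω) ≤ t}) ∧
      ∀ t : ℝ,
        ℙ {ω | max (Finset.univ.sup' hne fun i => X i ω + a i * Y i ω) (W ω) ≤ t}
          ≤ ℙ {ω | max (Finset.univ.sup' hne fun i => X i ω + a i * Y ⟨0, hQ⟩ ω) (W ω) ≤ t} := by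
  classical
  set Z : Ω → (Fin Q → ℝ) × ℝ := fun ω => (fun i => X i ω, W ω) with hZdef
  set V : Ω → (Fin Q → ℝ) := fun ω i => Y i ω with hVdef
  have hZ : Measurable Z := (measurable_pi_lambda _ fun i => hXmeas i).prodMk hWmeas
  have hV : Measurable V := measurable_pi_lambda _ fun i => hYmeas i
  have hmap : Measure.map (fun ω => (Z ω, V ω)) ℙ
      = (Measure.map Z ℙ).prod (Measure.map V ℙ) :=
    (indepFun_iff_map_prod_eq_prod_map_map hZ.aemeasurable hV.aemeasurable).1 hindep
  have hPZ : IsProbabilityMeasure (Measure.map Z ℙ) := Measure.isProbabilityMeasure_map hZ.aemeasurable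
  have hPV : IsProbabilityMeasure (Measure.map V ℙ) := Measure.isProbabilityMeasure_map hV.aemeasurable
  -- key lemma
  have key : ∀ (t : ℝ) (S : Set ((Fin Q → ℝ) × ℝ)), MeasurableSet S →
      ℙ {ω | Z ω ∈ S ∧ ∀ i, Y i ω ≤ (t - X i ω) / a i}
        ≤ ℙ {ω | Z ω ∈ S ∧ ∀ i, Y ⟨0, hQ⟩ ω ≤ (t - X i ω) / a i} := by
    intro t S hS
    set c : Fin Q → ((Fin Q → ℝ) × ℝ) → ℝ := fun i z => (t - z.1 i) / a i with hcdef
    have hcm : ∀ i, Measurable (c i) := fun i =>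
      ((measurable_const.sub ((measurable_pi_apply i).comp measurable_fst)).div_const _)
    set EI : Set (((Fin Q → ℝ) × ℝ) × (Fin Q → ℝ)) :=
      {p | p.1 ∈ S ∧ ∀ i, p.2 i ≤ c i p.1} with hEIdef
    set EC : Set (((Fin Q → ℝ) × ℝ) × (Fin Q → ℝ)) :=
      {p | p.1 ∈ S ∧ ∀ i, p.2 ⟨0, hQ⟩ ≤ c i p.1} with hECdef
    have hEI : MeasurableSet EI := by
      have : EI = (Prod.fst ⁻¹' S) ∩ ⋂ i, {p : ((Fin Q → ℝ) × ℝ) × (Fin Q → ℝ) | p.2 i ≤ c i p.1} := by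
        ext p; simp [EI]
      rw [this]
      exact (hS.preimage measurable_fst).inter <| MeasurableSet.iInter fun i =>
        measurableSet_le (measurable_snd.eval)
          ((hcm i).comp measurable_fst)
    have hEC : MeasurableSet EC := by
      have : EC = (Prod.fst ⁻¹' S) ∩ ⋂ i, {p : ((Fin Q → ℝ) × ℝ) × (Fin Q → ℝ) | p.2 ⟨0, hQ⟩ ≤ c i p.1} := by
        ext p; simp [EC]
      rw [this]
      exact (hS.preimage measurable_fst).inter <| MeasurableSet.iInter fun i =>
        measurableSet_le (measurable_snd.eval)
          ((hcm i).comp measurable_fst)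
    have hI : ℙ {ω | Z ω ∈ S ∧ ∀ i, Y i ω ≤ c i (Z ω)}
        = ((Measure.map Z ℙ).prod (Measure.map V ℙ)) EI := by
      rw [← hmap, Measure.map_apply (hZ.prodMk hV) hEI]; rfl
    have hC : ℙ {ω | Z ω ∈ S ∧ ∀ i, Y ⟨0, hQ⟩ ω ≤ c i (Z ω)}
        = ((Measure.map Z ℙ).prod (Measure.map V ℙ)) EC := by
      rw [← hmap, Measure.map_apply (hZ.prodMk hV) hEC]; rfl
    rw [hI, hC, Measure.prod_apply hEI, Measure.prod_apply hEC]
    apply lintegral_mono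
    intro z
    by_cases hzS : z ∈ S
    · have hIset : Prod.mk z ⁻¹' EI = {y : Fin Q → ℝ | ∀ i, y i ≤ c i z} := by
        ext y; simp [EI, hzS]
      obtain ⟨j, -, hj⟩ := Finset.exists_mem_eq_inf' hne fun i => c i z
      have hCset : Prod.mk z ⁻¹' EC
          = {y : Fin Q → ℝ | y ⟨0, hQ⟩ ≤ c j z} := by
        ext y
        simp only [EC, Set.mem_preimage, Set.mem_setOf_eq, hzS, true_and]
        rw [show (∀ i, y ⟨0, hQ⟩ ≤ c i z) ↔ y ⟨0, hQ⟩ ≤ Finset.univ.inf' hne fun i => c i z by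
          rw [Finset.le_inf'_iff]; simp, ← hj]
      simp only []
      rw [hIset, hCset]
      have hsetI : {y : Fin Q → ℝ | ∀ i, y i ≤ c i z}
          = ⋂ i, (fun y : Fin Q → ℝ => y i) ⁻¹' Set.Iic (c i z) := by
        ext y; simp
      have e1 : Measure.map V ℙ {y : Fin Q → ℝ | ∀ i, y i ≤ c i z}
          = ∏ i, ℙ (Y i ⁻¹' Set.Iic (c i z)) := by
        rw [Measure.map_apply hV (by
          rw [hsetI]
          exact MeasurableSet.iInter fun i => (measurable_pi_apply i) measurableSet_Iic)]
        have : V ⁻¹' {y : Fin Q → ℝ | ∀ i, y i ≤ c i z} = ⋂ i, Y i ⁻¹' Set.Iic (c i z) := by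
          ext ω; simp [V]
        rw [this]
        exact hYindep.meas_iInter fun i => ⟨Set.Iic (c i z), measurableSet_Iic, rfl⟩
      have e2 : Measure.map V ℙ {y : Fin Q → ℝ | y ⟨0, hQ⟩ ≤ c j z}
          = ℙ (Y ⟨0, hQ⟩ ⁻¹' Set.Iic (c j z)) := by
        have hps : {y : Fin Q → ℝ | y ⟨0, hQ⟩ ≤ c j z}
            = (fun y : Fin Q → ℝ => y ⟨0, hQ⟩) ⁻¹' Set.Iic (c j z) := rfl
        rw [hps, Measure.map_apply hV ((measurable_pi_apply _) measurableSet_Iic)]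
        rfl
      rw [e1, e2]
      have hjd : ℙ (Y j ⁻¹' Set.Iic (c j z)) = ℙ (Y ⟨0, hQ⟩ ⁻¹' Set.Iic (c j z)) := by
        rw [← Measure.map_apply (hYmeas j) measurableSet_Iic,
          ← Measure.map_apply (hYmeas ⟨0, hQ⟩) measurableSet_Iic,
          (hYident j ⟨0, hQ⟩).map_eq]
      calc ∏ i, ℙ (Y i ⁻¹' Set.Iic (c i z))
          = ℙ (Y j ⁻¹' Set.Iic (c j z)) * ∏ i ∈ Finset.univ.erase j, ℙ (Y i ⁻¹' Set.Iic (c i z)) :=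
            (Finset.mul_prod_erase Finset.univ _ (Finset.mem_univ j)).symm
        _ ≤ ℙ (Y j ⁻¹' Set.Iic (c j z)) * 1 :=
            mul_le_mul_right (Finset.prod_le_one (fun _ _ => zero_le) fun i _ => prob_le_one) _
        _ = ℙ (Y ⟨0, hQ⟩ ⁻¹' Set.Iic (c j z)) := by rw [mul_one, hjd]
    · have h1 : Prod.mk z ⁻¹' EI = ∅ := by
        ext y; simp [EI, hzS]
      have h2 : Prod.mk z ⁻¹' EC = ∅ := by
        ext y; simp [EC, hzS]
      simp [h1, h2]
  constructor
  · intro t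
    have h1 : {ω | (Finset.univ.sup' hne fun i => X i ω + a i * Y i ω) ≤ t}
        = {ω | Z ω ∈ (Set.univ : Set ((Fin Q → ℝ) × ℝ)) ∧ ∀ i, Y i ω ≤ (t - X i ω) / a i} := by
      ext ω
      simp only [Set.mem_setOf_eq, Finset.sup'_le_iff, Finset.mem_univ, true_implies, true_and, Set.mem_univ]
      refine forall_congr' fun i => ?_
      rw [le_div_iff₀ (ha_pos i), mul_comm]
      constructor <;> intro h <;> linarith
    have h2 : {ω | (Finset.univ.sup' hne fun i => X i ω + a i * Y ⟨0, hQ⟩ ω) ≤ t}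
        = {ω | Z ω ∈ (Set.univ : Set ((Fin Q → ℝ) × ℝ)) ∧ ∀ i, Y ⟨0, hQ⟩ ω ≤ (t - X i ω) / a i} := by
      ext ω
      simp only [Set.mem_setOf_eq, Finset.sup'_le_iff, Finset.mem_univ, true_implies, true_and, Set.mem_univ]
      refine forall_congr' fun i => ?_
      rw [le_div_iff₀ (ha_pos i), mul_comm]
      constructor <;> intro h <;> linarith
    rw [h1, h2]
    exact key t Set.univ MeasurableSet.univ
  · intro t
    have h1 : {ω | max (Finset.univ.sup' hne fun i => X i ω + a i * Y i ω) (W ω) ≤ t}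
        = {ω | Z ω ∈ {p : (Fin Q → ℝ) × ℝ | p.2 ≤ t} ∧ ∀ i, Y i ω ≤ (t - X i ω) / a i} := by
      ext ω
      simp only [Set.mem_setOf_eq, max_le_iff, Finset.sup'_le_iff, Finset.mem_univ, true_implies, true_and]
      rw [and_comm]
      refine and_congr_right fun _ => forall_congr' fun i => ?_
      rw [le_div_iff₀ (ha_pos i), mul_comm]
      constructor <;> intro h <;> linarith
    have h2 : {ω | max (Finset.univ.sup' hne fun i => X i ω + a i * Y ⟨0, hQ⟩ ω) (W ω) ≤ t}
        = {ω | Z ω ∈ {p : (Fin Q → ℝ) × ℝ | p.2 ≤ t} ∧ ∀ i, Y ⟨0, hQ⟩ ω ≤ (t - X i ω) / a i} := by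
      ext ω
      simp only [Set.mem_setOf_eq, max_le_iff, Finset.sup'_le_iff, Finset.mem_univ, true_implies, true_and]
      rw [and_comm]
      refine and_congr_right fun _ => forall_congr' fun i => ?_
      rw [le_div_iff₀ (ha_pos i), mul_comm]
      constructor <;> intro h <;> linarith
    rw [h1, h2]
    exact key t _ (measurableSet_le measurable_snd measurable_const)
end

section
/- Let $(Z_k)_{k=1}^{K}$ be real-valued random variables (not necessarily independent), each with mean $\mu$ and variance $\operatorname{Var}(Z_k) \le v$. Then $|\mathbb{E}[\max_{1 \le k \le K} Z_k] - \mu| \le \sqrt{(1 - 1/K) \cdot K v} = \sqrt{(K-1) v}$. -/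
open MeasureTheory ProbabilityTheory

lemma aux_zero_sum {K : ℕ} (hK : 0 < K) (hne : (Finset.univ : Finset (Fin K)).Nonempty)
    (b : Fin K → ℝ) (hsum : ∑ k, b k = 0) :
    Finset.univ.sup' hne b ≤ Real.sqrt ((((K:ℝ) - 1) / K) * ∑ k, (b k)^2) := by
  have hKpos : (0:ℝ) < K := Nat.cast_pos.mpr hK
  obtain ⟨j, -, hj⟩ := Finset.exists_mem_eq_sup' hne b
  set m := Finset.univ.sup' hne b with hm
  have hm0 : 0 ≤ m := by
    by_contra h
    push_neg at h
    have hle : ∀ k ∈ (Finset.univ : Finset (Fin K)), b k ≤ m := fun k hk => Finset.le_sup' b hk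
    have : (0:ℝ) < 0 := by
      calc (0:ℝ) = ∑ k, b k := hsum.symm
        _ ≤ ∑ _k : Fin K, m := Finset.sum_le_sum hle
        _ = K * m := by simp [mul_comm]
        _ < 0 := mul_neg_of_pos_of_neg hKpos h
    exact lt_irrefl _ this
  have hs1 : ∑ k ∈ Finset.univ.erase j, b k + b j = ∑ k, b k :=
    Finset.sum_erase_add _ _ (Finset.mem_univ j)
  have herase : ∑ k ∈ Finset.univ.erase j, b k = -m := by
    rw [hsum] at hs1; linarith [hj]
  have hs2 : ∑ k ∈ Finset.univ.erase j, (b k)^2 + (b j)^2 = ∑ k, (b k)^2 :=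
    Finset.sum_erase_add _ _ (Finset.mem_univ j)
  have hbj : (b j)^2 = m^2 := by rw [hj]
  have herase2 : ∑ k ∈ Finset.univ.erase j, (b k)^2 = (∑ k, (b k)^2) - m^2 := by
    linarith [hs2, hbj]
  have hcard : ((Finset.univ.erase j).card : ℝ) = (K:ℝ) - 1 := by
    rw [Finset.card_erase_of_mem (Finset.mem_univ j), Finset.card_univ, Fintype.card_fin,
      Nat.cast_sub hK]
    simp
  have hCS := sq_sum_le_card_mul_sum_sq (s := Finset.univ.erase j) (f := b)
  rw [herase, herase2, hcard] at hCS
  have hkey : m^2 ≤ (((K:ℝ) - 1) / K) * ∑ k, (b k)^2 := by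
    have h1 : m^2 ≤ ((K:ℝ) - 1) * ((∑ k, (b k)^2) - m^2) := by
      calc m^2 = (-m)^2 := by ring
        _ ≤ _ := hCS
    have hK1 : (0:ℝ) ≤ (K:ℝ) - 1 := by
      have : (1:ℝ) ≤ K := by exact_mod_cast hK
      linarith
    rw [div_mul_eq_mul_div, le_div_iff₀ hKpos]
    nlinarith
  calc m = Real.sqrt (m^2) := (Real.sqrt_sq hm0).symm
    _ ≤ _ := Real.sqrt_le_sqrt hkey

lemma aux_max_le {K : ℕ} (hK : 0 < K) (hne : (Finset.univ : Finset (Fin K)).Nonempty)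
    (y : Fin K → ℝ) :
    Finset.univ.sup' hne y ≤ (∑ k, y k) / K + Real.sqrt ((((K:ℝ) - 1) / K) * ∑ k, (y k)^2) := by
  have hKpos : (0:ℝ) < K := Nat.cast_pos.mpr hK
  set c := (∑ k, y k) / K with hc
  have hKc : (K:ℝ) * c = ∑ k, y k := by rw [hc]; field_simp
  have hsum : ∑ k, (y k - c) = 0 := by
    rw [Finset.sum_sub_distrib, Finset.sum_const, Finset.card_univ, Fintype.card_fin,
      nsmul_eq_mul]
    linarith [hKc]
  have h1 := aux_zero_sum hK hne (fun k => y k - c) hsum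
  have h2 : Finset.univ.sup' hne (fun k => y k - c) = Finset.univ.sup' hne y - c :=
    (Finset.comp_sup'_eq_sup'_comp hne (fun x : ℝ => x - c)
      (fun a b => by simp [max_sub_sub_right])).symm
  have h3 : ∑ k, (y k - c)^2 ≤ ∑ k, (y k)^2 := by
    have e1 : ∑ k, (y k - c)^2 = ∑ k, (y k)^2 - 2*c*(∑ k, y k) + K*c^2 := by
      rw [Finset.sum_congr rfl (fun k _ => by ring :
          ∀ k ∈ (Finset.univ : Finset (Fin K)), (y k - c)^2 = ((y k)^2 - 2*c*y k) + c^2),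
        Finset.sum_add_distrib, Finset.sum_sub_distrib, ← Finset.mul_sum, Finset.sum_const,
        Finset.card_univ, Fintype.card_fin, nsmul_eq_mul]
    rw [e1]
    have h4 : 2*c*(∑ k, y k) = 2*(K:ℝ)*c^2 := by rw [← hKc]; ring
    linarith [mul_nonneg hKpos.le (sq_nonneg c)]
  have hsq : Real.sqrt ((((K:ℝ) - 1) / K) * ∑ k, (y k - c)^2)
      ≤ Real.sqrt ((((K:ℝ) - 1) / K) * ∑ k, (y k)^2) := by
    apply Real.sqrt_le_sqrt
    apply mul_le_mul_of_nonneg_left h3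
    apply div_nonneg _ hKpos.le
    have : (1:ℝ) ≤ K := by exact_mod_cast hK
    linarith
  rw [h2] at h1
  have h1' : Finset.univ.sup' hne y - c ≤ Real.sqrt ((((K:ℝ) - 1) / K) * ∑ k, (y k - c)^2) := by
    convert h1 using 3
  linarith

theorem stmt_11 {Ω : Type*} [MeasureSpace Ω] [IsProbabilityMeasure (ℙ : Measure Ω)]
    (K : ℕ) (hK : 0 < K) (hne : (Finset.univ : Finset (Fin K)).Nonempty)
    (Z : Fin K → Ω → ℝ) (hmeas : ∀ k, Measurable (Z k)) (hL2 : ∀ k, MemLp (Z k) 2)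
    (μc : ℝ) (hmean : ∀ k, ∫ ω, Z k ω ∂ℙ = μc)
    (v : ℝ) (hvar : ∀ k, variance (Z k) ℙ ≤ v) :
    |(∫ ω, Finset.univ.sup' hne (fun k => Z k ω) ∂ℙ) - μc| ≤ Real.sqrt ((K - 1) * v) := by
  have hKpos : (0:ℝ) < K := Nat.cast_pos.mpr hK
  have hK1 : (1:ℝ) ≤ K := by exact_mod_cast hK
  set c : ℝ := ((K:ℝ) - 1) / K with hcdef
  have hc0 : 0 ≤ c := div_nonneg (by linarith) hKpos.le
  have hv0 : 0 ≤ v := le_trans (variance_nonneg (Z ⟨0, hK⟩) ℙ) (hvar ⟨0, hK⟩)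
  set Y : Fin K → Ω → ℝ := fun k ω => Z k ω - μc with hY
  have hYmeas : ∀ k, Measurable (Y k) := fun k => (hmeas k).sub measurable_const
  have hYL2 : ∀ k, MemLp (Y k) 2 := fun k => (hL2 k).sub (memLp_const μc)
  have hYint : ∀ k, Integrable (Y k) := fun k => (hYL2 k).integrable one_le_two
  have hZint : ∀ k, Integrable (Z k) := fun k => (hL2 k).integrable one_le_two
  have hYmean : ∀ k, ∫ ω, Y k ω ∂ℙ = 0 := by
    intro k
    simp only [hY]
    rw [integral_sub (hZint k) (integrable_const μc), hmean k, integral_const]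
    simp
  have hYsqint : ∀ k, Integrable (fun ω => Y k ω ^ 2) := fun k => (hYL2 k).integrable_sq
  have hYsq : ∀ k, ∫ ω, Y k ω ^ 2 ∂ℙ ≤ v := by
    intro k
    have hv := variance_eq_sub (hYL2 k)
    have hvz := variance_eq_sub (hL2 k)
    simp only [Pi.pow_apply] at hv hvz
    have hvareq : variance (Y k) ℙ = variance (Z k) ℙ := by
      rw [hv, hvz, hYmean k, hmean k]
      have e : ∫ ω, Y k ω ^ 2 ∂ℙ = (∫ ω, Z k ω ^ 2 ∂ℙ) - 2*μc*μc + μc^2 := by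
        have e0 : (fun ω => Y k ω ^ 2) = fun ω => (Z k ω ^ 2 - 2*μc*Z k ω) + μc^2 := by
          funext ω; simp only [hY]; ring
        have i1 : Integrable (fun ω => Z k ω ^ 2 - 2*μc*Z k ω) ℙ := by
          exact ((hL2 k).integrable_sq).sub ((hZint k).const_mul (2*μc))
        have i2 : Integrable (fun ω => 2*μc*Z k ω) ℙ := (hZint k).const_mul (2*μc)
        rw [e0, integral_add i1 (integrable_const _),
          integral_sub ((hL2 k).integrable_sq) i2,
          integral_const_mul, hmean k, integral_const]
        simp
      rw [e]; ring
    have : ∫ ω, Y k ω ^ 2 ∂ℙ = variance (Y k) ℙ := by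
      rw [hv, hYmean k]; ring
    rw [this, hvareq]
    exact hvar k
  set S : Ω → ℝ := fun ω => ∑ k, Y k ω ^ 2 with hS
  have hSint : Integrable S := integrable_finset_sum _ (fun k _ => hYsqint k)
  have hSnn : ∀ ω, 0 ≤ S ω := fun ω => Finset.sum_nonneg (fun k _ => sq_nonneg _)
  have hSmeas : Measurable S := by
    apply Finset.measurable_sum
    intro k _
    exact ((hYmeas k).pow_const 2)
  set g : Ω → ℝ := fun ω => Real.sqrt (c * S ω) with hg
  have hgmeas : Measurable g := (measurable_const.mul hSmeas).sqrt
  have hgnn : ∀ ω, 0 ≤ g ω := fun ω => Real.sqrt_nonneg _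
  have hgsq : ∀ ω, g ω ^ 2 = c * S ω := fun ω => Real.sq_sqrt (mul_nonneg hc0 (hSnn ω))
  have hgsqint : Integrable (fun ω => g ω ^ 2) := by
    have : (fun ω => g ω ^ 2) = fun ω => c * S ω := funext hgsq
    rw [this]
    exact hSint.const_mul c
  have hgL2 : MemLp g 2 := (memLp_two_iff_integrable_sq hgmeas.aestronglyMeasurable).2 hgsqint
  have hgint : Integrable g := hgL2.integrable one_le_two
  have hgsq_int_le : ∫ ω, g ω ^ 2 ∂ℙ ≤ ((K:ℝ) - 1) * v := by
    have e : ∫ ω, g ω ^ 2 ∂ℙ = c * ∑ k, ∫ ω, Y k ω ^ 2 ∂ℙ := by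
      have : (fun ω => g ω ^ 2) = fun ω => c * S ω := funext hgsq
      rw [this, integral_const_mul]
      congr 1
      exact integral_finset_sum _ (fun k _ => hYsqint k)
    rw [e]
    have h1 : ∑ k, ∫ ω, Y k ω ^ 2 ∂ℙ ≤ (K:ℝ) * v := by
      calc ∑ k, ∫ ω, Y k ω ^ 2 ∂ℙ ≤ ∑ _k : Fin K, v := Finset.sum_le_sum (fun k _ => hYsq k)
        _ = (K:ℝ) * v := by simp [mul_comm]
    have h2 : c * ((K:ℝ) * v) = ((K:ℝ) - 1) * v := by
      rw [hcdef]; field_simp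
    calc c * ∑ k, ∫ ω, Y k ω ^ 2 ∂ℙ ≤ c * ((K:ℝ) * v) := by
          exact mul_le_mul_of_nonneg_left h1 hc0
      _ = ((K:ℝ) - 1) * v := h2
  have hgmean : ∫ ω, g ω ∂ℙ ≤ Real.sqrt (((K:ℝ) - 1) * v) := by
    have h0 : 0 ≤ ∫ ω, g ω ∂ℙ := integral_nonneg hgnn
    have hvarg := variance_nonneg g ℙ
    have hdef := variance_eq_sub hgL2
    simp only [Pi.pow_apply] at hdef
    rw [hdef] at hvarg
    have : (∫ ω, g ω ∂ℙ)^2 ≤ ((K:ℝ) - 1) * v := by linarith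
    calc ∫ ω, g ω ∂ℙ = Real.sqrt ((∫ ω, g ω ∂ℙ)^2) := (Real.sqrt_sq h0).symm
      _ ≤ _ := Real.sqrt_le_sqrt this
  set M : Ω → ℝ := fun ω => Finset.univ.sup' hne (fun k => Z k ω) with hM
  have hMmeas : Measurable M := by
    have := Finset.measurable_sup' hne (fun k _ => hmeas k)
    convert this using 1
    funext ω
    rw [Finset.sup'_apply]
  have hMint : Integrable M := by
    apply Integrable.mono' (g := fun ω => ∑ k, |Z k ω|)
      (integrable_finset_sum _ (fun k _ => (hZint k).abs)) hMmeas.aestronglyMeasurable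
    filter_upwards with ω
    obtain ⟨j, -, hj⟩ := Finset.exists_mem_eq_sup' hne (fun k => Z k ω)
    rw [Real.norm_eq_abs]
    have : |M ω| = |Z j ω| := by rw [hM]; simp only; rw [hj]
    rw [this]
    exact Finset.single_le_sum (f := fun k => |Z k ω|) (fun i _ => abs_nonneg _)
      (Finset.mem_univ j)
  have hpt : ∀ ω, M ω - μc ≤ (∑ k, Y k ω) / K + g ω := by
    intro ω
    have h1 := aux_max_le hK hne (fun k => Y k ω)
    have h2 : Finset.univ.sup' hne (fun k => Y k ω)
        = Finset.univ.sup' hne (fun k => Z k ω) - μc :=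
      (Finset.comp_sup'_eq_sup'_comp hne (fun x : ℝ => x - μc)
        (fun a b => by simp [max_sub_sub_right])).symm
    rw [h2] at h1
    exact h1
  have hupper : (∫ ω, M ω ∂ℙ) - μc ≤ Real.sqrt (((K:ℝ) - 1) * v) := by
    have hint1 : Integrable (fun ω => M ω - μc) := hMint.sub (integrable_const μc)
    have hint2 : Integrable (fun ω => (∑ k, Y k ω) / K + g ω) :=
      ((integrable_finset_sum _ (fun k _ => hYint k)).div_const _).add hgint
    have h3 := integral_mono hint1 hint2 hpt
    rw [integral_sub hMint (integrable_const μc), integral_const] at h3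
    rw [integral_add ((integrable_finset_sum _ (fun k _ => hYint k)).div_const _) hgint] at h3
    have h4 : ∫ ω, (∑ k, Y k ω) / (K:ℝ) ∂ℙ = 0 := by
      rw [integral_div, integral_finset_sum _ (fun k _ => hYint k)]
      simp [hYmean]
    rw [h4] at h3
    simp at h3
    linarith [hgmean]
  have hlower : μc ≤ ∫ ω, M ω ∂ℙ := by
    have hj0 : ∀ ω, Z ⟨0, hK⟩ ω ≤ M ω := fun ω =>
      Finset.le_sup' (fun k => Z k ω) (Finset.mem_univ _)
    calc μc = ∫ ω, Z ⟨0, hK⟩ ω ∂ℙ := (hmean _).symm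
      _ ≤ _ := integral_mono (hZint _) hMint hj0
  rw [abs_sub_le_iff]
  constructor
  · exact hupper
  · have := Real.sqrt_nonneg (((K:ℝ) - 1) * v)
    linarith
end
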